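/- Let A be a 4×4 normal idempotent matrix with a_{32} + a_{41} < a_{31} + a_{42}, and set f_{kl} = a_{k1} + a_{l2} - a_{k2} - a_{l1}. With p = column 1, q = column 2, v¹³ = (-a_{41}, -a_{42}, a_{31}-a_{41}, 0), v²⁴ = (-a_{31}, -a_{32}, 0, a_{42}-a_{32}), the tropical distances satisfy: d(p, v¹³) = -f_{24}, d(q, v²⁴) = f_{13}, d(v¹³, v²⁴) = f_{34}, and d(p,q) = f_{12} = f_{13} + f_{34} + (-f_{24}). -/
import Mathlib


/-- Normalized difference: the zero-last-coordinate representative of `p - q`. -/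
noncomputable def normDiff (n : ℕ) (p q : Fin (n+1) → ℝ) : Fin (n+1) → ℝ :=
  fun i => (p i - q i) - (p (Fin.last n) - q (Fin.last n))

/-- The tropical distance on `ℝⁿ/ℝ(1,…,1)`. -/
noncomputable def tdist (n : ℕ) (p q : Fin (n+1) → ℝ) : ℝ :=
  Finset.univ.sup' Finset.univ_nonempty
    (fun ij : Fin (n+1) × Fin (n+1) =>
      max |normDiff n p q ij.1| |normDiff n p q ij.1 - normDiff n p q ij.2|)

lemma normDiff_last (n : ℕ) (p q : Fin (n+1) → ℝ) : normDiff n p q (Fin.last n) = 0 := by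
  simp [normDiff]

lemma tdist_eq_sub {n : ℕ} (p q : Fin (n+1) → ℝ) (a b : Fin (n+1))
    (hM : ∀ i, normDiff n p q i ≤ normDiff n p q a)
    (hm : ∀ i, normDiff n p q b ≤ normDiff n p q i) :
    tdist n p q = normDiff n p q a - normDiff n p q b := by
  have h0M : (0:ℝ) ≤ normDiff n p q a := by
    have := hM (Fin.last n); rwa [normDiff_last] at this
  have h0m : normDiff n p q b ≤ 0 := by
    have := hm (Fin.last n); rwa [normDiff_last] at this
  unfold tdist
  apply le_antisymm
  · apply Finset.sup'_le
    intro ij _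
    apply max_le
    · rw [abs_le]
      constructor
      · linarith [hm ij.1]
      · linarith [hM ij.1]
    · rw [abs_le]
      constructor
      · linarith [hm ij.1, hM ij.2]
      · linarith [hM ij.1, hm ij.2]
  · refine le_trans ?_ (Finset.le_sup' _ (Finset.mem_univ (a, b)))
    refine le_trans ?_ (le_max_right _ _)
    rw [abs_of_nonneg (by linarith)]

/-- For a 4×4 normal idempotent matrix with `a_{32}+a_{41} < a_{31}+a_{42}` and
`f_{kl} = a_{k1}+a_{l2}-a_{k2}-a_{l1}`, with `p, q` the first two columns and
`v¹³ = (-a_{41},-a_{42},a_{31}-a_{41},0)`, `v²⁴ = (-a_{31},-a_{32},0,a_{42}-a_{32})`: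
`d(p,v¹³) = -f_{24}`, `d(q,v²⁴) = f_{13}`, `d(v¹³,v²⁴) = f_{34}`, and
`d(p,q) = f_{12} = f_{13} + f_{34} + (-f_{24})`. -/
theorem stmt13 (A : Matrix (Fin 4) (Fin 4) ℝ)
    (hdiag : ∀ i, A i i = 0) (hneg : ∀ i j, A i j ≤ 0)
    (hsub : ∀ i j k, A i k + A k j ≤ A i j)
    (htype : A 2 1 + A 3 0 < A 2 0 + A 3 1) :
    let f : Fin 4 → Fin 4 → ℝ := fun k l => A k 0 + A l 1 - A k 1 - A l 0
    let p : Fin 4 → ℝ := fun i => A i 0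
    let q : Fin 4 → ℝ := fun i => A i 1
    let v13 : Fin 4 → ℝ := ![-(A 3 0), -(A 3 1), A 2 0 - A 3 0, 0]
    let v24 : Fin 4 → ℝ := ![-(A 2 0), -(A 2 1), 0, A 3 1 - A 2 1]
    tdist 3 p v13 = -(f 1 3) ∧
    tdist 3 q v24 = f 0 2 ∧
    tdist 3 v13 v24 = f 2 3 ∧
    tdist 3 p q = f 0 1 ∧
    f 0 1 = f 0 2 + f 2 3 + (-(f 1 3)) := by
  intro f p q v13 v24
  have d00 := hdiag 0
  have d11 := hdiag 1
  have d22 := hdiag 2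
  have d33 := hdiag 3
  have h1 := hsub 3 0 1  -- A 3 1 + A 1 0 ≤ A 3 0
  have h2 := hsub 2 1 0  -- A 2 0 + A 0 1 ≤ A 2 1
  have h3 := hsub 3 1 0  -- A 3 0 + A 0 1 ≤ A 3 1
  have h4 := hsub 2 0 1  -- A 2 1 + A 1 0 ≤ A 2 0
  have hlast3 : (Fin.last 3 : Fin 4) = 3 := rfl
  refine ⟨?_, ?_, ?_, ?_, by simp only [f]; ring⟩
  · rw [tdist_eq_sub p v13 0 1 ?_ ?_]
    · simp [normDiff, p, v13, f, hlast3]; linarith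
    · intro i; fin_cases i <;> simp [normDiff, p, v13, hlast3] <;> linarith
    · intro i; fin_cases i <;> simp [normDiff, p, v13, hlast3] <;> linarith
  · rw [tdist_eq_sub q v24 1 0 ?_ ?_]
    · simp [normDiff, q, v24, f, hlast3]; linarith
    · intro i; fin_cases i <;> simp [normDiff, q, v24, hlast3] <;> linarith
    · intro i; fin_cases i <;> simp [normDiff, q, v24, hlast3] <;> linarith
  · rw [tdist_eq_sub v13 v24 0 1 ?_ ?_]
    · simp [normDiff, v13, v24, f, hlast3]; linarith
    · intro i; fin_cases i <;> simp [normDiff, v13, v24, hlast3] <;> linarith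
    · intro i; fin_cases i <;> simp [normDiff, v13, v24, hlast3] <;> linarith
  · rw [tdist_eq_sub p q 0 1 ?_ ?_]
    · simp [normDiff, p, q, f, hlast3]; linarith
    · intro i; fin_cases i <;> simp [normDiff, p, q, hlast3] <;> linarith
    · intro i; fin_cases i <;> simp [normDiff, p, q, hlast3] <;> linarith
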